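/- If C is a monoidal model category in which every object is cofibrant, then the monoid axiom is a consequence of the pushout product axiom. -/

import Mathlib

open CategoryTheory CategoryTheory.Limits CategoryTheory.MonoidalCategory

universe v u

namespace Paper

variable {C : Type u} [Category.{v} C]

/-- `f` is a retract of `g` (in the arrow category). -/
def IsRetract {X Y X' Y' : C} (f : X ⟶ Y) (g : X' ⟶ Y') : Prop :=
  ∃ (i : Arrow.mk f ⟶ Arrow.mk g) (r : Arrow.mk g ⟶ Arrow.mk f), i ≫ r = 𝟙 _

/-- The morphism class determined by a family of maps. -/
def OfFamily {ι : Type*} {A B : ι → C} (g : ∀ i, A i ⟶ B i) : MorphismProperty C :=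
  fun _ _ f => ∃ i, Nonempty (Arrow.mk f ≅ Arrow.mk (g i))

/-- Cobase changes (pushouts) of maps in `S`. -/
def Pushouts (S : MorphismProperty C) : MorphismProperty C :=
  fun A B f => ∃ (X Y : C) (g : X ⟶ Y) (h : X ⟶ A) (k : Y ⟶ B), S g ∧ IsPushout h g f k

/-- The inclusion functor of the initial segment below `b`. -/
def segIncl {γ : Type v} [Preorder γ] (b : γ) : {a : γ // a < b} ⥤ γ :=
  Monotone.functor (f := fun a => a.1) (fun _ _ h => h)

/-- The cocone over the restriction of `F` to the segment below `b`, with point `F.obj b`. -/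
def segCocone {γ : Type v} [Preorder γ] (F : γ ⥤ C) (b : γ) : Cocone (segIncl b ⋙ F) where
  pt := F.obj b
  ι :=
    { app := fun a => F.map (homOfLE a.2.le)
      naturality := by
        intro a a' h
        dsimp [segIncl]
        rw [← F.map_comp, Category.comp_id]
        exact congrArg F.map (Subsingleton.elim _ _) }

/-- `F` is continuous at limit stages: at each limit element `b` the value `F.obj b`
is the colimit of the preceding values. -/
def IsContinuousSeq {γ : Type v} [Preorder γ] (F : γ ⥤ C) : Prop :=
  ∀ b : γ, Order.IsSuccLimit b → Nonempty (IsColimit (segCocone F b))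

/-- `f` is a transfinite composition of maps in `S`. -/
def IsTransfiniteCompositionOf (S : MorphismProperty C) {X Y : C} (f : X ⟶ Y) : Prop :=
  ∃ (γ : Type v) (_ : LinearOrder γ) (_ : WellFoundedLT γ) (_ : OrderBot γ) (_ : SuccOrder γ)
    (F : γ ⥤ C) (c : Cocone F) (_ : IsColimit c) (e : X ≅ F.obj ⊥) (e' : c.pt ≅ Y),
      (∀ b : γ, ¬ IsMax b → S (F.map (homOfLE (Order.le_succ b)))) ∧
      IsContinuousSeq F ∧ f = e.hom ≫ c.ι.app ⊥ ≫ e'.hom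

/-- The regular `S`-cofibrations: transfinite compositions of cobase changes of maps in `S`. -/
def cofReg (S : MorphismProperty C) : MorphismProperty C :=
  fun _ _ f => IsTransfiniteCompositionOf (Pushouts S) f

/-- Left lifting property with respect to a class. -/
def llp (S : MorphismProperty C) : MorphismProperty C :=
  fun _ _ f => ∀ ⦃X Y : C⦄ (p : X ⟶ Y), S p → HasLiftingProperty f p

/-- Right lifting property with respect to a family. -/
def rlpF {ι : Type*} {A B : ι → C} (g : ∀ i, A i ⟶ B i) : MorphismProperty C :=
  fun _ _ f => ∀ i, HasLiftingProperty (g i) f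

/-- `A` is small relative to the class `S` (in the sense of DHK):
for some regular cardinal `κ`, `Hom(A, -)` commutes with colimits of `λ`-sequences of
maps in `S`, for all regular `λ ≥ κ`. -/
def IsSmallRelTo (S : MorphismProperty C) (A : C) : Prop :=
  ∃ κ : Cardinal.{v}, κ.IsRegular ∧
    ∀ (γ : Type v) (_ : LinearOrder γ) (_ : WellFoundedLT γ) (_ : OrderBot γ) (_ : SuccOrder γ),
      κ ≤ Cardinal.mk γ → (Cardinal.mk γ).IsRegular →
      (∀ b : γ, Cardinal.mk {a : γ // a < b} < Cardinal.mk γ) →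
      ∀ (F : γ ⥤ C), (∀ b : γ, ¬ IsMax b → S (F.map (homOfLE (Order.le_succ b)))) →
        IsContinuousSeq F →
        ∀ (c : Cocone F), IsColimit c →
          (∀ g : A ⟶ c.pt, ∃ (b : γ) (h : A ⟶ F.obj b), h ≫ c.ι.app b = g) ∧
          (∀ (b b' : γ) (h : A ⟶ F.obj b) (h' : A ⟶ F.obj b'),
            h ≫ c.ι.app b = h' ≫ c.ι.app b' →
            ∃ (b'' : γ) (l : b ≤ b'') (l' : b' ≤ b''),
              h ≫ F.map (homOfLE l) = h' ≫ F.map (homOfLE l'))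

/-- A model structure: classes of weak equivalences, cofibrations and fibrations
satisfying (MC2)-(MC5). -/
structure ModelStruct (C : Type u) [Category.{v} C] where
  W : MorphismProperty C
  Cof : MorphismProperty C
  Fib : MorphismProperty C
  comp_W : ∀ {X Y Z : C} (f : X ⟶ Y) (g : Y ⟶ Z), W f → W g → W (f ≫ g)
  two_of_three_left : ∀ {X Y Z : C} (f : X ⟶ Y) (g : Y ⟶ Z), W (f ≫ g) → W g → W f
  two_of_three_right : ∀ {X Y Z : C} (f : X ⟶ Y) (g : Y ⟶ Z), W (f ≫ g) → W f → W g
  retract_W : ∀ {X Y X' Y' : C} (f : X ⟶ Y) (g : X' ⟶ Y'), IsRetract f g → W g → W f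
  retract_Cof : ∀ {X Y X' Y' : C} (f : X ⟶ Y) (g : X' ⟶ Y'), IsRetract f g → Cof g → Cof f
  retract_Fib : ∀ {X Y X' Y' : C} (f : X ⟶ Y) (g : X' ⟶ Y'), IsRetract f g → Fib g → Fib f
  lift_c_af : ∀ {A B X Y : C} (i : A ⟶ B) (p : X ⟶ Y), Cof i → Fib p → W p →
    HasLiftingProperty i p
  lift_ac_f : ∀ {A B X Y : C} (i : A ⟶ B) (p : X ⟶ Y), Cof i → W i → Fib p →
    HasLiftingProperty i p
  factor_c_af : ∀ {X Y : C} (f : X ⟶ Y), ∃ (Z : C) (i : X ⟶ Z) (p : Z ⟶ Y),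
    Cof i ∧ Fib p ∧ W p ∧ i ≫ p = f
  factor_ac_f : ∀ {X Y : C} (f : X ⟶ Y), ∃ (Z : C) (i : X ⟶ Z) (p : Z ⟶ Y),
    Cof i ∧ W i ∧ Fib p ∧ i ≫ p = f

/-- The acyclic cofibrations of a model structure. -/
def acof (M : ModelStruct C) : MorphismProperty C := fun _ _ f => M.Cof f ∧ M.W f

/-- Cofibrant generation data for a model structure: generating sets `I`, `J` with
the right lifting characterizations of (acyclic) fibrations and the smallness conditions. -/
structure CofGen (M : ModelStruct C) where
  ιI : Type v
  srcI : ιI → C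
  tgtI : ιI → C
  genI : ∀ i, srcI i ⟶ tgtI i
  ιJ : Type v
  srcJ : ιJ → C
  tgtJ : ιJ → C
  genJ : ∀ j, srcJ j ⟶ tgtJ j
  genI_cof : ∀ i, M.Cof (genI i)
  genJ_acof : ∀ j, acof M (genJ j)
  fib_iff : ∀ {X Y : C} (f : X ⟶ Y), M.Fib f ↔ ∀ j, HasLiftingProperty (genJ j) f
  acfib_iff : ∀ {X Y : C} (f : X ⟶ Y), (M.Fib f ∧ M.W f) ↔ ∀ i, HasLiftingProperty (genI i) f
  smallI : ∀ i, IsSmallRelTo (cofReg (OfFamily genI)) (srcI i)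
  smallJ : ∀ j, IsSmallRelTo (cofReg (OfFamily genJ)) (srcJ j)

section Monoidal

variable [MonoidalCategory C]

/-- The pushout product of `i` and `j`. -/
noncomputable def ppt [HasPushouts C] {A B K L : C} (i : A ⟶ B) (j : K ⟶ L) :
    pushout (A ◁ j) (i ▷ K) ⟶ B ⊗ L :=
  pushout.desc (i ▷ L) (B ◁ j) (whisker_exchange i j)

/-- The pushout product axiom. -/
def PushoutProductAxiom [HasPushouts C] (M : ModelStruct C) : Prop :=
  ∀ {A B K L : C} (i : A ⟶ B) (j : K ⟶ L), M.Cof i → M.Cof j →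
    M.Cof (ppt i j) ∧ (M.W i → M.W (ppt i j)) ∧ (M.W j → M.W (ppt i j))

/-- The class `S ∧ C` of maps of the form `g ▷ Z` with `g ∈ S`. -/
def smashAll (S : MorphismProperty C) : MorphismProperty C :=
  fun A' B' f => ∃ (X Y Z : C) (g : X ⟶ Y), S g ∧
    ∃ (eA : X ⊗ Z ≅ A') (eB : Y ⊗ Z ≅ B'), f = eA.inv ≫ (g ▷ Z) ≫ eB.hom

/-- The monoid axiom: every map in `({acyclic cofibrations} ∧ C)-cof_reg`
is a weak equivalence. -/
def MonoidAxiom [HasPushouts C] (M : ModelStruct C) : Prop :=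
  ∀ {X Y : C} (f : X ⟶ Y), cofReg (smashAll (acof M)) f → M.W f

end Monoidal

end Paper

namespace Paper
section AuxLemmas

variable {C : Type u} [Category.{v} C]

lemma isRetract_of_arrowIso {X Y X' Y' : C} {f : X ⟶ Y} {g : X' ⟶ Y'}
    (e : Arrow.mk f ≅ Arrow.mk g) : IsRetract f g :=
  ⟨e.hom, e.inv, e.hom_inv_id⟩

lemma acof_of_arrowIso (M : ModelStruct C) {X Y X' Y' : C} {f : X ⟶ Y} {g : X' ⟶ Y'}
    (e : Arrow.mk f ≅ Arrow.mk g) (hg : acof M g) : acof M f :=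
  ⟨M.retract_Cof f g (isRetract_of_arrowIso e) hg.1,
   M.retract_W f g (isRetract_of_arrowIso e) hg.2⟩

/-- The retract argument: a map with LLP against all fibrations is an acyclic cofibration. -/
lemma acof_of_llp_fib (M : ModelStruct C) {X Y : C} (f : X ⟶ Y)
    (h : ∀ {P Q : C} (p : P ⟶ Q), M.Fib p → HasLiftingProperty f p) : acof M f := by
  obtain ⟨Z, i, pr, hi, hwi, hpr, hfac⟩ := M.factor_ac_f f
  haveI := h pr hpr
  have sq : CommSq i f pr (𝟙 Y) := ⟨by rw [hfac, Category.comp_id]⟩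
  have hret : IsRetract f i := by
    refine ⟨Arrow.homMk' (u := 𝟙 X) (v := sq.lift) (by simp [sq.fac_left]),
      Arrow.homMk' (u := 𝟙 X) (v := pr) (by simp [hfac]), ?_⟩
    apply CommaMorphism.ext
    · simp
    · simpa using sq.fac_right
  exact ⟨M.retract_Cof f i hret hi, M.retract_W f i hret hwi⟩

/-- A pushout of a map with the LLP against `p` has the LLP against `p`. -/
lemma hasLiftingProperty_of_isPushout {X Y A B P Q : C} {g : X ⟶ Y} {h : X ⟶ A} {k : Y ⟶ B}
    {f : A ⟶ B} (po : IsPushout h g f k) (p : P ⟶ Q) [HasLiftingProperty g p] :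
    HasLiftingProperty f p := by
  constructor
  intro t s sq
  have sq' : CommSq (h ≫ t) g p (k ≫ s) :=
    ⟨by rw [Category.assoc, sq.w, ← Category.assoc, po.w, Category.assoc]⟩
  refine ⟨⟨⟨po.desc t sq'.lift sq'.fac_left.symm, po.inl_desc _ _ _, ?_⟩⟩⟩
  apply po.hom_ext
  · rw [← Category.assoc, po.inl_desc, sq.w]
  · rw [← Category.assoc, po.inr_desc, sq'.fac_right]

end AuxLemmas
section Transfinite

variable {C : Type u} [Category.{v} C]

/-- Transfinite compositions of maps with the LLP against `p` have the LLP against `p`. -/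
lemma transfinite_llp {γ : Type v} [LinearOrder γ] [WellFoundedLT γ] [OrderBot γ]
    [SuccOrder γ] (F : γ ⥤ C) (hcont : IsContinuousSeq F) (c : Cocone F) (hc : IsColimit c)
    {P Q : C} (p : P ⟶ Q)
    (hsucc : ∀ b : γ, ¬ IsMax b → HasLiftingProperty (F.map (homOfLE (Order.le_succ b))) p) :
    HasLiftingProperty (c.ι.app ⊥) p := by
  constructor
  intro t s sq
  classical
  -- predicate describing a compatible partial lift at stage b
  let Pred : ∀ b : γ, (∀ a, a < b → Option (F.obj a ⟶ P)) → (F.obj b ⟶ P) → Prop :=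
    fun b ih x =>
      (∀ a (h : a < b) (y : F.obj a ⟶ P), ih a h = some y →
        F.map (homOfLE h.le) ≫ x = y) ∧
      x ≫ p = c.ι.app b ≫ s ∧
      (∀ h : b = ⊥, x = eqToHom (congrArg F.obj h) ≫ t)
  let l : ∀ b : γ, Option (F.obj b ⟶ P) :=
    fun b => (wellFounded_lt (α := γ)).fix
      (fun b ih => if h : ∃ x, Pred b ih x then some h.choose else none) b
  have hl : ∀ b : γ, l b = if h : ∃ x, Pred b (fun a _ => l a) x then some h.choose else none :=
    fun b => WellFounded.fix_eq _ _ b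
  -- main spec by well-founded induction
  have spec : ∀ b : γ, ∃ x, l b = some x ∧ Pred b (fun a _ => l a) x := by
    intro b
    induction b using (wellFounded_lt (α := γ)).induction with
    | _ b IH =>
      suffices hex : ∃ x, Pred b (fun a _ => l a) x by
        refine ⟨hex.choose, ?_, hex.choose_spec⟩
        rw [hl b, dif_pos hex]
      by_cases hbot : b = ⊥
      · subst hbot
        exact ⟨t, fun a h => absurd h (not_lt_bot), sq.w, fun h => by simp⟩
      by_cases hlim : Order.IsSuccLimit b
      · -- limit case
        obtain ⟨colim⟩ := hcont b hlim
        let xf : ∀ a : {a : γ // a < b}, F.obj a.1 ⟶ P := fun a => (IH a.1 a.2).choose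
        have hxf : ∀ a : {a : γ // a < b},
            l a.1 = some (xf a) ∧ Pred a.1 (fun a _ => l a) (xf a) :=
          fun a => (IH a.1 a.2).choose_spec
        have hnat : ∀ (a a' : {a : γ // a < b}) (h : a.1 ≤ a'.1),
            F.map (homOfLE h) ≫ xf a' = xf a := by
          intro a a' h
          rcases eq_or_lt_of_le h with heq | hlt
          · have : a = a' := Subtype.ext heq
            subst this
            rw [show homOfLE h = 𝟙 a.1 from Subsingleton.elim _ _, F.map_id, Category.id_comp]
          · exact (hxf a').2.1 a.1 hlt (xf a) (hxf a).1
        let K : Cocone (segIncl b ⋙ F) :=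
          { pt := P
            ι :=
              { app := fun a => xf a
                naturality := by
                  intro a a' m
                  have hm : m = homOfLE (leOfHom m) := Subsingleton.elim _ _
                  dsimp [segIncl]
                  refine Eq.trans ?_ (Category.comp_id _).symm
                  exact hnat a a' (leOfHom m) } }
        refine ⟨colim.desc K, ?_, ?_, fun h => absurd h hlim.ne_bot⟩
        · intro a h y hy
          have fac := colim.fac K ⟨a, h⟩
          dsimp [segCocone, K] at fac
          refine Eq.trans fac ?_
          have hy' : l a = some y := hy
          exact Option.some_injective _ ((hxf ⟨a, h⟩).1.symm.trans hy')
        · apply colim.hom_ext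
          intro a
          have fac := colim.fac K a
          dsimp [segCocone, K] at fac ⊢
          rw [← Category.assoc, fac]
          exact (hxf a).2.2.1.trans (by simp; rfl)
      · -- successor case
        have hpre : ¬ Order.IsSuccPrelimit b := by
          rcases Order.not_isSuccLimit_iff.mp hlim with h | h
          · exact absurd h.eq_bot hbot
          · exact h
        obtain ⟨a, hab⟩ := Order.not_isSuccPrelimit_iff_exists_covBy.mp hpre
        have hna : ¬ IsMax a := hab.lt.not_isMax
        have hsb : Order.succ a = b := hab.succ_eq
        subst hsb
        obtain ⟨xa, hxa_eq, hxa⟩ := IH a (Order.lt_succ_of_not_isMax hna)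
        haveI := hsucc a hna
        have sq' : CommSq xa (F.map (homOfLE (Order.le_succ a))) p
            (c.ι.app (Order.succ a) ≫ s) :=
          ⟨by rw [hxa.2.1, ← c.w (homOfLE (Order.le_succ a)), Category.assoc]⟩
        refine ⟨sq'.lift, ?_, sq'.fac_right,
          fun h => absurd (h ▸ Order.lt_succ_of_not_isMax hna) not_lt_bot⟩
        intro a' h y hy
        rcases eq_or_lt_of_le ((Order.lt_succ_iff_of_not_isMax hna).mp h) with heq | hlt
        · subst heq
          have hy' : l a' = some y := hy
          rw [← Option.some_injective _ (hxa_eq.symm.trans hy')]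
          exact sq'.fac_left
        · rw [show (homOfLE h.le : a' ⟶ Order.succ a) =
            homOfLE hlt.le ≫ homOfLE (Order.le_succ a) from Subsingleton.elim _ _,
            F.map_comp, Category.assoc, sq'.fac_left]
          exact hxa.1 a' hlt y hy
  -- assemble the global lift
  let xf : ∀ b : γ, F.obj b ⟶ P := fun b => (spec b).choose
  have hxf : ∀ b, l b = some (xf b) ∧ Pred b (fun a _ => l a) (xf b) :=
    fun b => (spec b).choose_spec
  have hnat : ∀ (b b' : γ) (h : b ≤ b'), F.map (homOfLE h) ≫ xf b' = xf b := by
    intro b b' h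
    rcases eq_or_lt_of_le h with heq | hlt
    · subst heq
      rw [show homOfLE h = 𝟙 b from Subsingleton.elim _ _, F.map_id, Category.id_comp]
    · exact (hxf b').2.1 b hlt (xf b) (hxf b).1
  let K : Cocone F :=
    { pt := P
      ι :=
        { app := xf
          naturality := by
            intro b b' m
            rw [show m = homOfLE (leOfHom m) from Subsingleton.elim _ _]
            simpa using hnat b b' (leOfHom m) } }
  refine ⟨⟨⟨hc.desc K, ?_, ?_⟩⟩⟩
  · rw [hc.fac K ⊥]
    show xf ⊥ = t
    rw [(hxf ⊥).2.2.2 rfl]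
    simp
  · apply hc.hom_ext
    intro b
    rw [← Category.assoc, hc.fac K b]
    show xf b ≫ p = c.ι.app b ≫ s
    exact (hxf b).2.2.1

end Transfinite
section MonoidalAux

variable {C : Type u} [Category.{v} C] [HasColimits C] [HasInitial C]
  [MonoidalCategory C] [SymmetricCategory C] [MonoidalClosed C]

noncomputable def tensorInitialIsInitial (X : C) : IsInitial (X ⊗ (⊥_ C)) := by
  haveI : PreservesColimitsOfSize.{0, 0} (tensorLeft X) :=
    (ihom.adjunction X).leftAdjoint_preservesColimits
  exact initialIsInitial.isInitialObj (tensorLeft X) (⊥_ C)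

lemma whiskerRight_acof (M : ModelStruct C) (hpp : PushoutProductAxiom M)
    (hcof : ∀ X : C, M.Cof (initial.to X)) {X Y : C} (g : X ⟶ Y) (hg : acof M g) (Z : C) :
    acof M (g ▷ Z) := by
  have hI : IsInitial (X ⊗ (⊥_ C)) := tensorInitialIsInitial X
  have hI' : IsInitial (Y ⊗ (⊥_ C)) := tensorInitialIsInitial Y
  set j0 : (⊥_ C) ⟶ Z := initial.to Z with hj0
  have hppt := hpp g j0 hg.1 (hcof Z)
  refine acof_of_arrowIso M
    (Arrow.isoMk
      (⟨pushout.inl _ _, pushout.desc (𝟙 _) (hI'.to _) (hI.hom_ext _ _), ?_, ?_⟩ :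
        X ⊗ Z ≅ pushout (X ◁ j0) (g ▷ (⊥_ C)))
      (Iso.refl _) ?_) ⟨hppt.1, hppt.2.1 hg.2⟩
  · rw [pushout.inl_desc]
  · apply pushout.hom_ext
    · rw [← Category.assoc, pushout.inl_desc, Category.id_comp, Category.comp_id]
    · exact hI'.hom_ext _ _
  · show pushout.inl _ _ ≫ ppt g j0 = (g ▷ Z) ≫ 𝟙 _
    dsimp [ppt]
    rw [pushout.inl_desc, Category.comp_id]

end MonoidalAux

/-- in a monoidal model category in which every object is cofibrant,
the monoid axiom is a consequence of the pushout product axiom. -/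
theorem statement3 {C : Type u} [Category.{v} C] [HasLimits C] [HasColimits C]
    [HasInitial C] [MonoidalCategory C] [SymmetricCategory C] [MonoidalClosed C]
    (M : ModelStruct C) (hpp : PushoutProductAxiom M)
    (hcof : ∀ X : C, M.Cof (initial.to X)) :
    MonoidAxiom M := by
  intro X Y f hf
  have key : ∀ {A B : C} (q : A ⟶ B), Pushouts (smashAll (acof M)) q →
      ∀ {P Q : C} (p : P ⟶ Q), M.Fib p → HasLiftingProperty q p := by
    intro A B q hq P Q p hp
    obtain ⟨X', Y', g', h, k, hg', po⟩ := hq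
    obtain ⟨X0, Y0, Z, g, hg, eA, eB, rfl⟩ := hg'
    have hac : acof M (eA.inv ≫ (g ▷ Z) ≫ eB.hom) := by
      refine acof_of_arrowIso M (Arrow.isoMk eA.symm eB.symm ?_)
        (whiskerRight_acof M hpp hcof g hg Z)
      dsimp
      simp
    haveI : HasLiftingProperty (eA.inv ≫ (g ▷ Z) ≫ eB.hom) p :=
      M.lift_ac_f _ p hac.1 hac.2 hp
    exact hasLiftingProperty_of_isPushout po p
  obtain ⟨γ, _, _, _, _, F, c, hcolim, e, e', hsucc, hcont, rfl⟩ := hf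
  have hL : ∀ {P Q : C} (p : P ⟶ Q), M.Fib p → HasLiftingProperty (c.ι.app ⊥) p :=
    fun p hp => transfinite_llp F hcont c hcolim p (fun b hb => key _ (hsucc b hb) p hp)
  refine (acof_of_llp_fib M _ ?_).2
  intro P Q p hp
  haveI := hL p hp
  infer_instance

end Paper
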